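/- Let X_1 and X_2 be independent random variables, each uniformly distributed on [0,1], and let S := X_1 + X_2. Then for every integer k ≥ 1 and i ∈ {1,2}, the conditional expectation satisfies 𝔼[X_i^k | σ(S)] = g_k(S) almost surely, where g_k(s) = s^k/(k+1) for 0 ≤ s < 1 and g_k(s) = (1 − (s−1)^{k+1})/((k+1)(2−s)) for 1 ≤ s ≤ 2. Consequently, for k = 2 the ratio 𝔼[(X_i/S)^2 | σ(S)] is not almost surely constant, and there exists q ∈ [0,1) with r^2_{q,1} ≠ r̃^2_{q,1}; hence the distributional equality of the k-th order partially size-biased sums does not imply r^k_{q,i} = r̃^k_{q,i} for all q. -/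

import Mathlib

open MeasureTheory Set
open scoped Classical

/-- Value-at-Risk at level `q`: `inf {s ∈ [0,∞) : ℙ(S ≤ s) ≥ q}`. -/
noncomputable def VaR {Ω : Type*} [MeasurableSpace Ω] (μ : Measure Ω) (S : Ω → ℝ) (q : ℝ) : ℝ :=
  sInf {s : ℝ | 0 ≤ s ∧ ENNReal.ofReal q ≤ μ {ω | S ω ≤ s}}

/-- The tail event `{S > VaR_q(S)}`. -/
def tailSet {Ω : Type*} [MeasurableSpace Ω] (μ : Measure Ω) (S : Ω → ℝ) (q : ℝ) : Set Ω :=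
  {ω | VaR μ S q < S ω}

/-- CTE-based proportional allocation `r_{q,i} = 𝔼[X·1{S>s_q}]/𝔼[S·1{S>s_q}]`. -/
noncomputable def cteAlloc {Ω : Type*} [MeasurableSpace Ω] (μ : Measure Ω)
    (X S : Ω → ℝ) (q : ℝ) : ℝ :=
  (∫ ω in tailSet μ S q, X ω ∂μ) / (∫ ω in tailSet μ S q, S ω ∂μ)

/-- GTE-based proportional allocation `r̃_{q,i} = 𝔼[(X/S)·1{S>s_q}]/ℙ(S>s_q)`. -/
noncomputable def gteAlloc {Ω : Type*} [MeasurableSpace Ω] (μ : Measure Ω)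
    (X S : Ω → ℝ) (q : ℝ) : ℝ :=
  (∫ ω in tailSet μ S q, X ω / S ω ∂μ) / (μ (tailSet μ S q)).toReal

/-- The conditional-moment function `g_k` for the sum of two iid Uniform[0,1] variables. -/
noncomputable def uniformCondMoment (k : ℕ) (s : ℝ) : ℝ :=
  if s < 1 then s ^ k / (k + 1)
  else (1 - (s - 1) ^ (k + 1)) / ((k + 1) * (2 - s))

/-- For `S = X₁ + X₂` with `X₁, X₂` iid Uniform[0,1]: `𝔼[X_i^k | σ(S)] = g_k(S)` a.s.; for
`k = 2` the conditional expectation `𝔼[(X₁/S)² | σ(S)]` is not a.s. constant and there is a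
level `q ∈ [0,1)` at which the second-order CTE- and GTE-based allocations differ. -/
lemma UC.nu_prob : IsProbabilityMeasure ((volume : Measure ℝ).restrict (Icc 0 1)) := by
  constructor
  simp [Real.volume_Icc]

lemma UC.g_measurable (k : ℕ) : Measurable (uniformCondMoment k) := by
  unfold uniformCondMoment
  exact Measurable.ite (measurableSet_lt measurable_id measurable_const)
    (by fun_prop) (by fun_prop)

lemma UC.g_mem (k : ℕ) {s : ℝ} (hs : s ∈ Icc (0:ℝ) 2) :
    uniformCondMoment k s ∈ Icc (0:ℝ) 1 := by
  obtain ⟨hs0, hs2⟩ := hs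
  unfold uniformCondMoment
  by_cases h : s < 1
  · rw [if_pos h]
    constructor
    · positivity
    · apply div_le_one_of_le₀
      · calc s ^ k ≤ 1 := pow_le_one₀ hs0 h.le
          _ ≤ (k:ℝ) + 1 := by have := Nat.cast_nonneg (α := ℝ) k; linarith
      · positivity
  · rw [if_neg h]
    push_neg at h
    have ht0 : (0:ℝ) ≤ s - 1 := by linarith
    have ht1 : s - 1 ≤ 1 := by linarith
    have hnum0 : 0 ≤ 1 - (s-1) ^ (k+1) := by
      have := pow_le_one₀ ht0 ht1 (n := k+1)
      linarith
    have hden0 : (0:ℝ) ≤ ((k:ℝ)+1) * (2 - s) := by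
      have : (0:ℝ) ≤ 2 - s := by linarith
      positivity
    constructor
    · exact div_nonneg hnum0 hden0
    · apply div_le_one_of_le₀ _ hden0
      -- Bernoulli: 1 + (k+1)*(s-2) ≤ (s-1)^(k+1)
      have hb : 1 + ((k:ℝ)+1) * (s - 2) ≤ (s - 1) ^ (k+1) := by
        have := one_add_mul_le_pow (a := s - 2) (by linarith) (k+1)
        have h2 : 1 + (s - 2) = s - 1 := by ring
        rw [h2] at this
        calc 1 + ((k:ℝ)+1) * (s-2) = 1 + ((k+1 : ℕ):ℝ) * (s-2) := by push_cast; ring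
          _ ≤ (s-1)^(k+1) := this
      nlinarith

lemma UC.fiber (k : ℕ) (s : ℝ) :
    ∫ x in Icc (max 0 (s-1)) (min 1 s), ((x:ℝ)^k - uniformCondMoment k s) = 0 := by
  rcases lt_or_ge s 0 with hs | hs0
  · rw [Icc_eq_empty (by simp only [not_le]; exact lt_of_le_of_lt (min_le_right 1 s) (lt_of_lt_of_le hs (le_max_left 0 (s-1))))]
    simp
  rcases lt_or_ge s 1 with hs1 | hs1
  · have hmax : max 0 (s-1) = 0 := max_eq_left (by linarith)
    have hmin : min 1 s = s := min_eq_right (by linarith)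
    rw [hmax, hmin, integral_Icc_eq_integral_Ioc, ← intervalIntegral.integral_of_le hs0]
    have hg : uniformCondMoment k s = s ^ k / (k+1) := if_pos hs1
    rw [intervalIntegral.integral_sub (intervalIntegral.intervalIntegrable_pow k)
      intervalIntegrable_const, integral_pow, intervalIntegral.integral_const, hg]
    have : ((k:ℝ)+1) ≠ 0 := by positivity
    simp only [smul_eq_mul]
    field_simp
    ring
  rcases le_or_gt s 2 with hs2 | hs2
  · have hmax : max 0 (s-1) = s - 1 := max_eq_right (by linarith)
    have hmin : min 1 s = 1 := min_eq_left (by linarith)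
    have hle : s - 1 ≤ 1 := by linarith
    rw [hmax, hmin, integral_Icc_eq_integral_Ioc, ← intervalIntegral.integral_of_le hle]
    have hg : uniformCondMoment k s = (1 - (s - 1) ^ (k + 1)) / ((k + 1) * (2 - s)) :=
      if_neg (by linarith)
    rw [intervalIntegral.integral_sub (intervalIntegral.intervalIntegrable_pow k)
      intervalIntegrable_const, integral_pow, intervalIntegral.integral_const, hg]
    rcases eq_or_lt_of_le hs2 with h2 | h2
    · subst h2
      norm_num
    · have hne : (2:ℝ) - s ≠ 0 := by linarith
      have : ((k:ℝ)+1) ≠ 0 := by positivity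
      simp only [smul_eq_mul]
      field_simp
      ring
  · rw [Icc_eq_empty (by simp only [not_le]; exact lt_of_le_of_lt (min_le_left 1 s) (by simp only [lt_max_iff]; right; linarith))]
    simp

lemma UC.trans_add (f : ℝ → ℝ) (x : ℝ) :
    ∫ y in Icc (0:ℝ) 1, f (x + y) = ∫ s in Icc x (x+1), f s := by
  rw [integral_Icc_eq_integral_Ioc, integral_Icc_eq_integral_Ioc,
    ← intervalIntegral.integral_of_le (by norm_num : (0:ℝ) ≤ 1),
    ← intervalIntegral.integral_of_le (by linarith : x ≤ x+1),
    intervalIntegral.integral_comp_add_left f x, add_zero]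

lemma UC.ratio_mem {x y : ℝ} (hx : 0 ≤ x) (hy : 0 ≤ y) : x / (x + y) ∈ Icc (0:ℝ) 1 := by
  rcases eq_or_lt_of_le (by linarith : (0:ℝ) ≤ x + y) with h | h
  · simp [← h]
  · exact ⟨div_nonneg hx (by linarith), div_le_one_of_le₀ (by linarith) (by linarith)⟩

-- ∫ s in a..b, (x/s)^2 = x^2 * (a⁻¹ - b⁻¹) when 0 < a ≤ b
lemma UC.ftc_invsq {x a b : ℝ} (ha : 0 < a) (hab : a ≤ b) :
    ∫ s in a..b, (x / s)^2 = x^2 * (a⁻¹ - b⁻¹) := by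
  have h1 : (fun s : ℝ => (x / s)^2) = fun s : ℝ => x^2 * s ^ (-2 : ℤ) := by
    funext s
    rw [div_pow, zpow_neg, div_eq_mul_inv]
    norm_num
  have hmem : (0:ℝ) ∉ Set.uIcc a b := by
    rw [Set.uIcc_of_le hab]
    rintro ⟨h0', -⟩
    linarith
  rw [h1, intervalIntegral.integral_const_mul, integral_zpow (Or.inr ⟨by norm_num, hmem⟩)]
  have hb : b ≠ 0 := by linarith
  have ha' : a ≠ 0 := by linarith
  have e1 : (-2 + 1 : ℤ) = -1 := by norm_num
  rw [e1, zpow_neg_one, zpow_neg_one]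
  push_cast
  ring

-- inner integral for E[(X1/S)^2]
lemma UC.inner_total {x : ℝ} (hx : x ∈ Icc (0:ℝ) 1) :
    ∫ y in Icc (0:ℝ) 1, (x / (x + y))^2 = x - x^2/(x+1) := by
  rw [UC.trans_add (fun s => (x/s)^2) x]
  rcases eq_or_lt_of_le hx.1 with h0 | h0
  · simp [← h0]
  · rw [integral_Icc_eq_integral_Ioc, ← intervalIntegral.integral_of_le (by linarith : x ≤ x + 1),
      UC.ftc_invsq h0 (by linarith)]
    have hx1 : x + 1 ≠ 0 := by linarith
    field_simp

lemma UC.inner_le_one {x : ℝ} (hx : x ∈ Icc (0:ℝ) 1) :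
    ∫ y in Icc (0:ℝ) 1, (if x + y ≤ 1 then (x / (x + y))^2 else 0) = x - x^2 := by
  have h1 : (fun y => if x + y ≤ 1 then (x / (x + y))^2 else 0)
      = fun y => (Iic (1:ℝ)).indicator (fun s => (x/s)^2) (x + y) := by
    funext y
    simp [Set.indicator_apply, Set.mem_Iic]
  rw [h1, UC.trans_add ((Iic (1:ℝ)).indicator (fun s => (x/s)^2)) x,
    integral_Icc_eq_integral_Ioc, setIntegral_indicator measurableSet_Iic,
    Set.Ioc_inter_Iic, inf_eq_right.mpr (by linarith [hx.1] : (1:ℝ) ≤ x + 1)]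
  rcases eq_or_lt_of_le hx.1 with h0 | h0
  · simp [← h0]
  · rw [← intervalIntegral.integral_of_le hx.2, UC.ftc_invsq h0 hx.2]
    have : x ≠ 0 := ne_of_gt h0
    field_simp

lemma UC.inner_one {x : ℝ} (hx : x ∈ Icc (0:ℝ) 1) :
    ∫ y in Icc (0:ℝ) 1, (if x + y ≤ 1 then (1:ℝ) else 0) = 1 - x := by
  have h1 : (fun y => if x + y ≤ 1 then (1:ℝ) else 0)
      = fun y => (Iic (1:ℝ)).indicator (fun _ => (1:ℝ)) (x + y) := by
    funext y
    simp [Set.indicator_apply, Set.mem_Iic]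
  rw [h1, UC.trans_add _ x, integral_Icc_eq_integral_Ioc,
    setIntegral_indicator measurableSet_Iic,
    Set.Ioc_inter_Iic, inf_eq_right.mpr (by linarith [hx.1] : (1:ℝ) ≤ x + 1),
    setIntegral_const, Real.volume_real_Ioc_of_le (by linarith [hx.2]), smul_eq_mul, mul_one]

lemma UC.outer_total : ∫ x in Icc (0:ℝ) 1, (x - x^2/(x+1)) = 1 - Real.log 2 := by
  rw [integral_Icc_eq_integral_Ioc, ← intervalIntegral.integral_of_le (by norm_num : (0:ℝ) ≤ 1)]
  rw [intervalIntegral.integral_congr (g := fun x : ℝ => 1 - (x+1)⁻¹) ?_]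
  · rw [intervalIntegral.integral_sub intervalIntegrable_const ?_]
    · rw [intervalIntegral.integral_const,
        intervalIntegral.integral_comp_add_right (fun u : ℝ => u⁻¹) 1,
        integral_inv (by rw [Set.uIcc_of_le (by norm_num : (0:ℝ)+1 ≤ 1+1)]; rintro ⟨h, -⟩; linarith)]
      norm_num
    · apply ContinuousOn.intervalIntegrable
      apply ContinuousOn.inv₀ (by fun_prop)
      intro t ht
      rw [Set.uIcc_of_le (by norm_num : (0:ℝ) ≤ 1)] at ht
      have := ht.1
      intro h
      linarith
  · intro t ht
    rw [Set.uIcc_of_le (by norm_num : (0:ℝ) ≤ 1)] at ht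
    have h1 : t + 1 ≠ 0 := by have := ht.1; intro h; linarith
    field_simp
    ring

lemma UC.outer_le_one : ∫ x in Icc (0:ℝ) 1, (x - x^2) = 1/6 := by
  rw [integral_Icc_eq_integral_Ioc, ← intervalIntegral.integral_of_le (by norm_num : (0:ℝ) ≤ 1),
    intervalIntegral.integral_sub (intervalIntegral.intervalIntegrable_id)
      (intervalIntegral.intervalIntegrable_pow 2),
    integral_id, integral_pow]
  norm_num

lemma UC.outer_one : ∫ x in Icc (0:ℝ) 1, (1 - x) = 1/2 := by
  rw [integral_Icc_eq_integral_Ioc, ← intervalIntegral.integral_of_le (by norm_num : (0:ℝ) ≤ 1),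
    intervalIntegral.integral_sub intervalIntegrable_const
      (intervalIntegral.intervalIntegrable_id),
    integral_id, intervalIntegral.integral_const]
  norm_num

lemma UC.outer_sq : ∫ x in Icc (0:ℝ) 1, x^2 = 1/3 := by
  rw [integral_Icc_eq_integral_Ioc, ← intervalIntegral.integral_of_le (by norm_num : (0:ℝ) ≤ 1),
    integral_pow]
  norm_num

lemma UC.outer_id : ∫ x in Icc (0:ℝ) 1, x = 1/2 := by
  rw [integral_Icc_eq_integral_Ioc, ← intervalIntegral.integral_of_le (by norm_num : (0:ℝ) ≤ 1),
    integral_id]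
  norm_num

lemma UC.swap_zero (H : ℝ → ℝ → ℝ) (hH : Measurable (Function.uncurry H)) (C : ℝ) (hC0 : 0 ≤ C)
    (hCb : ∀ x s : ℝ, x ∈ Icc (0:ℝ) 1 → s ∈ Icc x (x+1) → |H x s| ≤ C)
    (h0 : ∀ s : ℝ, ∫ x in Icc (max 0 (s-1)) (min 1 s), H x s = 0) :
    ∫ x in Icc (0:ℝ) 1, ∫ s in Icc x (x+1), H x s = 0 := by
  set T : Set (ℝ × ℝ) := {p : ℝ × ℝ | p.1 ∈ Icc (0:ℝ) 1 ∧ p.2 ∈ Icc p.1 (p.1+1)} with hT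
  have hTm : MeasurableSet T := by
    have hTeq : T = (Prod.fst ⁻¹' Icc (0:ℝ) 1) ∩
        ({p : ℝ×ℝ | p.1 ≤ p.2} ∩ {p : ℝ×ℝ | p.2 ≤ p.1 + 1}) := by
      ext p
      simp only [hT, Set.mem_setOf_eq, Set.mem_inter_iff, Set.mem_preimage, Set.mem_Icc]
    rw [hTeq]
    exact (measurable_fst measurableSet_Icc).inter
      ((measurableSet_le measurable_fst measurable_snd).inter
        (measurableSet_le measurable_snd (measurable_fst.add_const 1)))
  set K : ℝ × ℝ → ℝ := T.indicator (Function.uncurry H) with hK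
  have hKm : Measurable K := hH.indicator hTm
  have hKint : Integrable K (volume.prod volume) := by
    apply Integrable.mono' (g := (Icc (0:ℝ) 1 ×ˢ Icc (0:ℝ) 2).indicator (fun _ => C))
    · rw [integrable_indicator_iff (measurableSet_Icc.prod measurableSet_Icc)]
      apply (integrableOn_const_iff (C := C) enorm_ne_top).mpr
      right
      rw [Measure.prod_prod, Real.volume_Icc, Real.volume_Icc]
      exact ENNReal.mul_lt_top ENNReal.ofReal_lt_top ENNReal.ofReal_lt_top
    · exact hKm.aestronglyMeasurable
    · apply Filter.Eventually.of_forall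
      intro p
      by_cases hp : p ∈ T
      · rw [hK, Set.indicator_of_mem hp]
        have hmem : p ∈ Icc (0:ℝ) 1 ×ˢ Icc (0:ℝ) 2 := by
          obtain ⟨h1, h2⟩ := hp
          refine ⟨h1, ?_, ?_⟩
          · linarith [h2.1, h1.1]
          · linarith [h2.2, h1.2]
        rw [Set.indicator_of_mem hmem]
        exact hCb p.1 p.2 hp.1 hp.2
      · rw [hK, Set.indicator_of_notMem hp]
        simp only [norm_zero]
        exact Set.indicator_nonneg (fun _ _ => hC0) p
  have hswap : ∫ x : ℝ, ∫ s : ℝ, K (x, s) = ∫ s : ℝ, ∫ x : ℝ, K (x, s) :=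
    integral_integral_swap hKint
  have hL : ∀ x : ℝ, (∫ s : ℝ, K (x, s)) =
      (Icc (0:ℝ) 1).indicator (fun x => ∫ s in Icc x (x+1), H x s) x := by
    intro x
    by_cases hx : x ∈ Icc (0:ℝ) 1
    · rw [Set.indicator_of_mem hx]
      have hfun : (fun s => K (x, s)) = (Icc x (x+1)).indicator (fun s => H x s) := by
        funext s
        by_cases hs : s ∈ Icc x (x+1)
        · rw [Set.indicator_of_mem hs, hK, Set.indicator_of_mem (by exact ⟨hx, hs⟩)]
          rfl
        · rw [Set.indicator_of_notMem hs, hK,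
            Set.indicator_of_notMem (by rintro ⟨-, h⟩; exact hs h)]
      rw [hfun, integral_indicator measurableSet_Icc]
    · rw [Set.indicator_of_notMem hx]
      have hfun : (fun s => K (x, s)) = fun _ => (0:ℝ) := by
        funext s
        rw [hK, Set.indicator_of_notMem (by rintro ⟨h, -⟩; exact hx h)]
      rw [hfun, integral_zero]
  have hR : ∀ s : ℝ, (∫ x : ℝ, K (x, s)) = 0 := by
    intro s
    have hfun : (fun x => K (x, s)) =
        (Icc (0:ℝ) 1 ∩ Icc (s-1) s).indicator (fun x => H x s) := by
      funext x
      by_cases hx : x ∈ Icc (0:ℝ) 1 ∩ Icc (s-1) s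
      · rw [Set.indicator_of_mem hx, hK]
        rw [Set.indicator_of_mem]
        · rfl
        · exact ⟨hx.1, by constructor <;> linarith [hx.2.1, hx.2.2]⟩
      · rw [Set.indicator_of_notMem hx, hK, Set.indicator_of_notMem]
        rintro ⟨h1, h2⟩
        exact hx ⟨h1, by constructor <;> linarith [h2.1, h2.2]⟩
    rw [hfun, integral_indicator (measurableSet_Icc.inter measurableSet_Icc),
      Set.Icc_inter_Icc]
    have : (0:ℝ) ⊔ (s-1) = max 0 (s-1) := rfl
    have h2 : (1:ℝ) ⊓ s = min 1 s := rfl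
    rw [this, h2]
    exact h0 s
  calc ∫ x in Icc (0:ℝ) 1, ∫ s in Icc x (x+1), H x s
      = ∫ x : ℝ, (Icc (0:ℝ) 1).indicator (fun x => ∫ s in Icc x (x+1), H x s) x := by
        rw [integral_indicator measurableSet_Icc]
    _ = ∫ x : ℝ, ∫ s : ℝ, K (x, s) := by
        congr 1
        funext x
        rw [hL x]
    _ = ∫ s : ℝ, ∫ x : ℝ, K (x, s) := hswap
    _ = 0 := by
        have : (fun s : ℝ => ∫ x : ℝ, K (x, s)) = fun _ => (0:ℝ) := funext hR
        rw [this, integral_zero]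

lemma UC.bridge {Ω : Type*} [MeasurableSpace Ω] (μ : Measure Ω) [IsProbabilityMeasure μ]
    {X Y : Ω → ℝ} (hX : Measurable X) (hY : Measurable Y)
    (hindep : ProbabilityTheory.IndepFun X Y μ)
    (hlX : Measure.map X μ = (volume : Measure ℝ).restrict (Set.Icc 0 1))
    (hlY : Measure.map Y μ = (volume : Measure ℝ).restrict (Set.Icc 0 1))
    (F : ℝ → ℝ → ℝ) (hF : Measurable (Function.uncurry F)) (C : ℝ)
    (hC : ∀ x ∈ Icc (0:ℝ) 1, ∀ y ∈ Icc (0:ℝ) 1, |F x y| ≤ C) :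
    ∫ ω, F (X ω) (Y ω) ∂μ = ∫ x in Icc (0:ℝ) 1, ∫ y in Icc (0:ℝ) 1, F x y := by
  haveI : IsProbabilityMeasure ((volume : Measure ℝ).restrict (Icc 0 1)) := UC.nu_prob
  have hmap : Measure.map (fun ω => (X ω, Y ω)) μ =
      ((volume : Measure ℝ).restrict (Icc 0 1)).prod ((volume : Measure ℝ).restrict (Icc 0 1)) := by
    exact ((ProbabilityTheory.indepFun_iff_map_prod_eq_prod_map_map hX.aemeasurable
      hY.aemeasurable).mp hindep).trans (by rw [hlX, hlY])
  have h1 : ∫ ω, F (X ω) (Y ω) ∂μ =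
      ∫ p : ℝ × ℝ, Function.uncurry F p ∂(Measure.map (fun ω => (X ω, Y ω)) μ) := by
    rw [integral_map (hX.prodMk hY).aemeasurable hF.aestronglyMeasurable]
    rfl
  rw [h1, hmap]
  have hint : Integrable (Function.uncurry F)
      (((volume : Measure ℝ).restrict (Icc 0 1)).prod ((volume : Measure ℝ).restrict (Icc 0 1))) := by
    apply Integrable.mono' (integrable_const C) hF.aestronglyMeasurable
    rw [Measure.prod_restrict]
    refine (ae_restrict_mem (measurableSet_Icc.prod measurableSet_Icc)).mono ?_
    rintro ⟨x, y⟩ ⟨hx, hy⟩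
    exact hC x hx y hy
  rw [integral_prod _ hint]
  rfl

lemma UC.borel_real : (borel ℝ) = (inferInstance : MeasurableSpace ℝ) :=
  (BorelSpace.measurable_eq).symm

lemma UC.ae_mem_Icc {Ω : Type*} [MeasurableSpace Ω] (μ : Measure Ω)
    {Z : Ω → ℝ} (hZ : Measurable Z)
    (hlZ : Measure.map Z μ = (volume : Measure ℝ).restrict (Set.Icc 0 1)) :
    ∀ᵐ ω ∂μ, Z ω ∈ Icc (0:ℝ) 1 := by
  have h0 : μ (Z ⁻¹' (Icc (0:ℝ) 1)ᶜ) = 0 := by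
    rw [← Measure.map_apply hZ measurableSet_Icc.compl, hlZ,
      Measure.restrict_apply measurableSet_Icc.compl]
    simp
  rw [ae_iff]
  convert h0 using 2
  rfl

lemma UC.ae_pos {Ω : Type*} [MeasurableSpace Ω] (μ : Measure Ω)
    {Z : Ω → ℝ} (hZ : Measurable Z)
    (hlZ : Measure.map Z μ = (volume : Measure ℝ).restrict (Set.Icc 0 1)) :
    ∀ᵐ ω ∂μ, 0 < Z ω := by
  have h0 : μ (Z ⁻¹' (Iic (0:ℝ))) = 0 := by
    rw [← Measure.map_apply hZ measurableSet_Iic, hlZ,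
      Measure.restrict_apply measurableSet_Iic]
    have he : Iic (0:ℝ) ∩ Icc 0 1 = {0} := by
      ext t
      simp only [Set.mem_inter_iff, Set.mem_Iic, Set.mem_Icc, Set.mem_singleton_iff]
      constructor
      · rintro ⟨h1, h2, h3⟩; linarith
      · rintro rfl; norm_num
    rw [he]
    exact measure_singleton 0
  rw [ae_iff]
  convert h0 using 2
  ext ω
  simp [not_lt]

/-- Main conditional expectation computation. -/
lemma UC.condexp_moment {Ω : Type*} [MeasurableSpace Ω] (μ : Measure Ω) [IsProbabilityMeasure μ]
    {X Y : Ω → ℝ} (hX : Measurable X) (hY : Measurable Y)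
    (hindep : ProbabilityTheory.IndepFun X Y μ)
    (hlX : Measure.map X μ = (volume : Measure ℝ).restrict (Set.Icc 0 1))
    (hlY : Measure.map Y μ = (volume : Measure ℝ).restrict (Set.Icc 0 1))
    (k : ℕ) :
    μ[(fun ω => X ω ^ k) | MeasurableSpace.comap (fun ω => X ω + Y ω) (borel ℝ)]
      =ᵐ[μ] fun ω => uniformCondMoment k (X ω + Y ω) := by
  rw [UC.borel_real]
  set S : Ω → ℝ := fun ω => X ω + Y ω with hS
  have hSm : Measurable S := hX.add hY
  have hm : MeasurableSpace.comap S (inferInstance : MeasurableSpace ℝ)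
      ≤ (inferInstance : MeasurableSpace Ω) := hSm.comap_le
  haveI : IsFiniteMeasure (μ.trim hm) := isFiniteMeasure_trim hm
  have haeX : ∀ᵐ ω ∂μ, X ω ∈ Icc (0:ℝ) 1 := UC.ae_mem_Icc μ hX hlX
  have haeY : ∀ᵐ ω ∂μ, Y ω ∈ Icc (0:ℝ) 1 := UC.ae_mem_Icc μ hY hlY
  have haeS : ∀ᵐ ω ∂μ, S ω ∈ Icc (0:ℝ) 2 := (haeX.and haeY).mono (by
    rintro ω ⟨h1, h2⟩
    exact ⟨by simp only [hS]; linarith [h1.1, h2.1], by simp only [hS]; linarith [h1.2, h2.2]⟩)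
  have hfi : Integrable (fun ω => X ω ^ k) μ := by
    apply Integrable.mono' (integrable_const 1) (hX.pow_const k).aestronglyMeasurable
    exact haeX.mono fun ω h => by
      rw [Real.norm_eq_abs, abs_of_nonneg (pow_nonneg h.1 k)]
      exact pow_le_one₀ h.1 h.2
  have hgm : Measurable (fun ω => uniformCondMoment k (S ω)) := (UC.g_measurable k).comp hSm
  have hgi : Integrable (fun ω => uniformCondMoment k (S ω)) μ := by
    apply Integrable.mono' (integrable_const 1) hgm.aestronglyMeasurable
    exact haeS.mono fun ω h => by
      have := UC.g_mem k h
      rw [Real.norm_eq_abs, abs_of_nonneg this.1]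
      exact this.2
  symm
  apply ae_eq_condExp_of_forall_setIntegral_eq hm hfi
    (fun s _ _ => hgi.integrableOn)
  · intro s hs _
    obtain ⟨B, hB, rfl⟩ := MeasurableSpace.measurableSet_comap.mp hs
    have hpre : MeasurableSet (S ⁻¹' B) := hSm hB
    rw [eq_comm, ← sub_eq_zero, ← integral_sub hfi.integrableOn hgi.integrableOn,
      ← integral_indicator hpre]
    have hform : (fun ω => (S ⁻¹' B).indicator
          (fun ω => X ω ^ k - uniformCondMoment k (S ω)) ω)
        = fun ω => if X ω + Y ω ∈ B then X ω ^ k - uniformCondMoment k (X ω + Y ω) else 0 := by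
      funext ω
      have hw : X ω + Y ω = S ω := rfl
      simp only [hw]
      by_cases h : S ω ∈ B
      · rw [Set.indicator_of_mem (show ω ∈ S ⁻¹' B from h), if_pos h]
      · rw [Set.indicator_of_notMem (show ω ∉ S ⁻¹' B from h), if_neg h]
    have hbr : ∫ ω, (if X ω + Y ω ∈ B then X ω ^ k - uniformCondMoment k (X ω + Y ω) else 0) ∂μ
        = ∫ x in Icc (0:ℝ) 1, ∫ y in Icc (0:ℝ) 1,
            (if x + y ∈ B then x ^ k - uniformCondMoment k (x + y) else 0) := by
      apply UC.bridge μ hX hY hindep hlX hlY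
        (fun x y => if x + y ∈ B then x ^ k - uniformCondMoment k (x + y) else 0) ?_ 2 ?_
      · apply Measurable.ite ((measurable_fst.add measurable_snd) hB)
        · exact (measurable_fst.pow_const k).sub
            ((UC.g_measurable k).comp (measurable_fst.add measurable_snd))
        · exact measurable_const
      · intro x hx y hy
        beta_reduce
        by_cases h : x + y ∈ B
        · rw [if_pos h]
          have hxp : x ^ k ∈ Icc (0:ℝ) 1 := ⟨pow_nonneg hx.1 k, pow_le_one₀ hx.1 hx.2⟩
          have hgmem : uniformCondMoment k (x+y) ∈ Icc (0:ℝ) 1 :=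
            UC.g_mem k ⟨by linarith [hx.1, hy.1], by linarith [hx.2, hy.2]⟩
          rw [abs_le]
          constructor
          · linarith [hxp.1, hgmem.2]
          · linarith [hxp.2, hgmem.1]
        · rw [if_neg h]
          norm_num
    have hcongr : (∫ x in Icc (0:ℝ) 1, ∫ y in Icc (0:ℝ) 1,
            (if x + y ∈ B then x ^ k - uniformCondMoment k (x + y) else 0))
        = ∫ x in Icc (0:ℝ) 1, ∫ t in Icc x (x+1),
            (if t ∈ B then x ^ k - uniformCondMoment k t else 0) := by
      apply setIntegral_congr_fun measurableSet_Icc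
      intro x _
      exact UC.trans_add (fun t => if t ∈ B then x ^ k - uniformCondMoment k t else 0) x
    rw [hform, hbr, hcongr]
    refine UC.swap_zero (fun x t => if t ∈ B then x ^ k - uniformCondMoment k t else 0)
      ?_ 2 (by norm_num) ?_ ?_
    · apply Measurable.ite (measurable_snd hB)
      · exact (measurable_fst.pow_const k).sub
          ((UC.g_measurable k).comp measurable_snd)
      · exact measurable_const
    · intro x t hx ht
      beta_reduce
      by_cases h : t ∈ B
      · rw [if_pos h]
        have hxp : x ^ k ∈ Icc (0:ℝ) 1 := ⟨pow_nonneg hx.1 k, pow_le_one₀ hx.1 hx.2⟩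
        have hgmem : uniformCondMoment k t ∈ Icc (0:ℝ) 1 :=
          UC.g_mem k ⟨by linarith [ht.1, hx.1], by linarith [ht.2, hx.2]⟩
        rw [abs_le]
        constructor
        · linarith [hxp.1, hgmem.2]
        · linarith [hxp.2, hgmem.1]
      · rw [if_neg h]
        norm_num
    · intro t
      beta_reduce
      by_cases h : t ∈ B
      · simp only [if_pos h]
        exact UC.fiber k t
      · simp only [if_neg h]
        simp
  · exact StronglyMeasurable.aestronglyMeasurable
      (Measurable.stronglyMeasurable
        ((UC.g_measurable k).comp (fun t ht => ⟨t, ht, rfl⟩)))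

theorem uniform_counterexample
    {Ω : Type*} [MeasurableSpace Ω] (μ : Measure Ω) [IsProbabilityMeasure μ]
    (X₁ X₂ : Ω → ℝ) (hX₁ : Measurable X₁) (hX₂ : Measurable X₂)
    (hindep : ProbabilityTheory.IndepFun X₁ X₂ μ)
    (hlaw₁ : Measure.map X₁ μ = (volume : Measure ℝ).restrict (Set.Icc 0 1))
    (hlaw₂ : Measure.map X₂ μ = (volume : Measure ℝ).restrict (Set.Icc 0 1))
    (S : Ω → ℝ) (hS : S = fun ω => X₁ ω + X₂ ω) :
    (∀ k : ℕ, 1 ≤ k →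
      (μ[(fun ω => X₁ ω ^ k) | MeasurableSpace.comap S (borel ℝ)] =ᵐ[μ]
        fun ω => uniformCondMoment k (S ω)) ∧
      (μ[(fun ω => X₂ ω ^ k) | MeasurableSpace.comap S (borel ℝ)] =ᵐ[μ]
        fun ω => uniformCondMoment k (S ω))) ∧
    (¬ ∃ c : ℝ, μ[(fun ω => (X₁ ω / S ω) ^ 2) | MeasurableSpace.comap S (borel ℝ)]
        =ᵐ[μ] fun _ => c) ∧
    (∃ q ∈ Set.Ico (0 : ℝ) 1,
      (∫ ω in tailSet μ S q, X₁ ω ^ 2 ∂μ) / (∫ ω in tailSet μ S q, S ω ^ 2 ∂μ) ≠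
        (∫ ω in tailSet μ S q, (X₁ ω / S ω) ^ 2 ∂μ) / (μ (tailSet μ S q)).toReal) := by
  have hSm : Measurable S := by rw [hS]; exact hX₁.add hX₂
  have hSeq : ∀ ω, S ω = X₁ ω + X₂ ω := fun ω => by rw [hS]
  have hcomm : S = fun ω => X₂ ω + X₁ ω := by
    funext ω; rw [hSeq ω, add_comm]
  -- the σ-algebra
  have hm : MeasurableSpace.comap S (borel ℝ) ≤ (inferInstance : MeasurableSpace Ω) := by
    rw [UC.borel_real]; exact hSm.comap_le
  haveI : IsFiniteMeasure (μ.trim hm) := isFiniteMeasure_trim hm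
  -- a.e. facts
  have hae₁ : ∀ᵐ ω ∂μ, X₁ ω ∈ Icc (0:ℝ) 1 := UC.ae_mem_Icc μ hX₁ hlaw₁
  have hae₂ : ∀ᵐ ω ∂μ, X₂ ω ∈ Icc (0:ℝ) 1 := UC.ae_mem_Icc μ hX₂ hlaw₂
  have hSpos : ∀ᵐ ω ∂μ, 0 < S ω := by
    filter_upwards [UC.ae_pos μ hX₁ hlaw₁, hae₂] with ω h1 h2
    rw [hSeq ω]; linarith [h2.1]
  -- integrability helper
  have hBint : ∀ (f : Ω → ℝ), Measurable f → (∀ᵐ ω ∂μ, |f ω| ≤ 1) → Integrable f μ := by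
    intro f hf hb
    apply Integrable.mono' (integrable_const 1) hf.aestronglyMeasurable
    exact hb
  -- key integrands
  have hRm : Measurable (fun ω => (X₁ ω / S ω)^2) := (hX₁.div hSm).pow_const 2
  have hRae : ∀ᵐ ω ∂μ, (X₁ ω / S ω)^2 ∈ Icc (0:ℝ) 1 := by
    filter_upwards [hae₁, hae₂] with ω h1 h2
    rw [hSeq ω]
    have hr := UC.ratio_mem h1.1 h2.1
    exact ⟨sq_nonneg _, pow_le_one₀ hr.1 hr.2⟩
  have hRint : Integrable (fun ω => (X₁ ω / S ω)^2) μ :=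
    hBint _ hRm (hRae.mono fun ω h => by rw [abs_of_nonneg h.1]; exact h.2)
  have hX1int : Integrable X₁ μ :=
    hBint _ hX₁ (hae₁.mono fun ω h => by rw [abs_of_nonneg h.1]; exact h.2)
  have hX2int : Integrable X₂ μ :=
    hBint _ hX₂ (hae₂.mono fun ω h => by rw [abs_of_nonneg h.1]; exact h.2)
  have hsq1int : Integrable (fun ω => (X₁ ω)^2) μ :=
    hBint _ (hX₁.pow_const 2) (hae₁.mono fun ω h => by
      rw [abs_of_nonneg (sq_nonneg _)]; exact pow_le_one₀ h.1 h.2)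
  have hsq2int : Integrable (fun ω => (X₂ ω)^2) μ :=
    hBint _ (hX₂.pow_const 2) (hae₂.mono fun ω h => by
      rw [abs_of_nonneg (sq_nonneg _)]; exact pow_le_one₀ h.1 h.2)
  have hmulint : Integrable (fun ω => X₁ ω * X₂ ω) μ :=
    hBint _ (hX₁.mul hX₂) ((hae₁.and hae₂).mono fun ω ⟨h1, h2⟩ => by
      rw [abs_of_nonneg (mul_nonneg h1.1 h2.1)]
      calc X₁ ω * X₂ ω ≤ 1 * 1 := mul_le_mul h1.2 h2.2 h2.1 zero_le_one
        _ = 1 := by norm_num)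
  -- one-dimensional moments
  have QX2 : ∫ ω, (X₁ ω)^2 ∂μ = 1/3 := by
    have h := integral_map (μ := μ) (φ := X₁) (f := fun x : ℝ => x^2) hX₁.aemeasurable
      (by fun_prop)
    rw [hlaw₁] at h
    rw [← h]
    exact UC.outer_sq
  have QX1 : ∫ ω, X₁ ω ∂μ = 1/2 := by
    have h := integral_map (μ := μ) (φ := X₁) (f := fun x : ℝ => x) hX₁.aemeasurable measurable_id.aestronglyMeasurable
    rw [hlaw₁] at h
    rw [← h]
    exact UC.outer_id
  have QY1 : ∫ ω, X₂ ω ∂μ = 1/2 := by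
    have h := integral_map (μ := μ) (φ := X₂) (f := fun x : ℝ => x) hX₂.aemeasurable measurable_id.aestronglyMeasurable
    rw [hlaw₂] at h
    rw [← h]
    exact UC.outer_id
  have QY2 : ∫ ω, (X₂ ω)^2 ∂μ = 1/3 := by
    have h := integral_map (μ := μ) (φ := X₂) (f := fun x : ℝ => x^2) hX₂.aemeasurable (by fun_prop)
    rw [hlaw₂] at h
    rw [← h]
    exact UC.outer_sq
  have Qmul : ∫ ω, X₁ ω * X₂ ω ∂μ = 1/4 := by
    have h : ∫ ω, X₁ ω * X₂ ω ∂μ = (∫ ω, X₁ ω ∂μ) * ∫ ω, X₂ ω ∂μ :=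
      hindep.integral_mul_eq_mul_integral hX1int.aestronglyMeasurable hX2int.aestronglyMeasurable
    rw [h, QX1, QY1]
    norm_num
  have QS2 : ∫ ω, (S ω)^2 ∂μ = 7/6 := by
    have hexp : (fun ω => (S ω)^2)
        = fun ω => (X₁ ω)^2 + (2 * (X₁ ω * X₂ ω) + (X₂ ω)^2) := by
      funext ω; rw [hSeq ω]; ring
    have hg2a : Integrable (fun ω => 2 * (X₁ ω * X₂ ω)) μ := hmulint.const_mul 2
    have hg2 : Integrable (fun ω => 2 * (X₁ ω * X₂ ω) + X₂ ω ^ 2) μ := hg2a.add hsq2int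
    rw [hexp, integral_add hsq1int hg2, integral_add hg2a hsq2int,
      integral_const_mul, Qmul, QX2, QY2]
    norm_num
  -- bridge computations
  have Qtot : ∫ ω, (X₁ ω / S ω)^2 ∂μ = 1 - Real.log 2 := by
    have hform : (fun ω => (X₁ ω / S ω)^2)
        = fun ω => (X₁ ω / (X₁ ω + X₂ ω))^2 := by
      funext ω; rw [hSeq ω]
    have hbr : ∫ ω, (X₁ ω / (X₁ ω + X₂ ω))^2 ∂μ
        = ∫ x in Icc (0:ℝ) 1, ∫ y in Icc (0:ℝ) 1, (x / (x + y))^2 := by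
      apply UC.bridge μ hX₁ hX₂ hindep hlaw₁ hlaw₂ (fun x y => (x/(x+y))^2) (by fun_prop) 1
      intro x hx y hy
      beta_reduce
      have hr := UC.ratio_mem hx.1 hy.1
      rw [abs_of_nonneg (sq_nonneg _)]
      exact pow_le_one₀ hr.1 hr.2
    have hcon : (∫ x in Icc (0:ℝ) 1, ∫ y in Icc (0:ℝ) 1, (x / (x + y))^2)
        = ∫ x in Icc (0:ℝ) 1, (x - x^2/(x+1)) :=
      setIntegral_congr_fun measurableSet_Icc (fun x hx => UC.inner_total hx)
    rw [hform, hbr, hcon, UC.outer_total]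
  have hA : MeasurableSet {ω | S ω ≤ 1} := measurableSet_le hSm measurable_const
  have QA : ∫ ω in {ω | S ω ≤ 1}, (X₁ ω / S ω)^2 ∂μ = 1/6 := by
    rw [← integral_indicator hA]
    have hform : (fun ω => ({ω | S ω ≤ 1}).indicator (fun ω => (X₁ ω / S ω)^2) ω)
        = fun ω => if X₁ ω + X₂ ω ≤ 1 then (X₁ ω / (X₁ ω + X₂ ω))^2 else 0 := by
      funext ω
      rw [← hSeq ω]
      by_cases h : S ω ≤ 1
      · rw [Set.indicator_of_mem (show ω ∈ {ω | S ω ≤ 1} from h), if_pos h]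
      · rw [Set.indicator_of_notMem (show ω ∉ {ω | S ω ≤ 1} from h), if_neg h]
    have hbr : ∫ ω, (if X₁ ω + X₂ ω ≤ 1 then (X₁ ω / (X₁ ω + X₂ ω))^2 else 0) ∂μ
        = ∫ x in Icc (0:ℝ) 1, ∫ y in Icc (0:ℝ) 1,
            (if x + y ≤ 1 then (x / (x + y))^2 else 0) := by
      apply UC.bridge μ hX₁ hX₂ hindep hlaw₁ hlaw₂
        (fun x y => if x + y ≤ 1 then (x/(x+y))^2 else 0) ?_ 1 ?_
      · apply Measurable.ite (measurableSet_le (measurable_fst.add measurable_snd)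
          measurable_const) (by fun_prop) measurable_const
      · intro x hx y hy
        beta_reduce
        by_cases h : x + y ≤ 1
        · rw [if_pos h, abs_of_nonneg (sq_nonneg _)]
          have hr := UC.ratio_mem hx.1 hy.1
          exact pow_le_one₀ hr.1 hr.2
        · rw [if_neg h]
          norm_num
    have hcon : (∫ x in Icc (0:ℝ) 1, ∫ y in Icc (0:ℝ) 1,
            (if x + y ≤ 1 then (x / (x + y))^2 else 0))
        = ∫ x in Icc (0:ℝ) 1, (x - x^2) :=
      setIntegral_congr_fun measurableSet_Icc (fun x hx => UC.inner_le_one hx)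
    rw [hform, hbr, hcon, UC.outer_le_one]
  have QP : (μ {ω | S ω ≤ 1}).toReal = 1/2 := by
    rw [← measureReal_def, ← integral_indicator_one hA]
    have hform : (fun ω => ({ω | S ω ≤ 1}).indicator (1 : Ω → ℝ) ω)
        = fun ω => if X₁ ω + X₂ ω ≤ 1 then (1:ℝ) else 0 := by
      funext ω
      rw [← hSeq ω]
      by_cases h : S ω ≤ 1
      · rw [Set.indicator_of_mem (show ω ∈ {ω | S ω ≤ 1} from h), if_pos h]; rfl
      · rw [Set.indicator_of_notMem (show ω ∉ {ω | S ω ≤ 1} from h), if_neg h]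
    have hbr : ∫ ω, (if X₁ ω + X₂ ω ≤ 1 then (1:ℝ) else 0) ∂μ
        = ∫ x in Icc (0:ℝ) 1, ∫ y in Icc (0:ℝ) 1, (if x + y ≤ 1 then (1:ℝ) else 0) := by
      apply UC.bridge μ hX₁ hX₂ hindep hlaw₁ hlaw₂
        (fun x y => if x + y ≤ 1 then (1:ℝ) else 0) ?_ 1 ?_
      · exact Measurable.ite (measurableSet_le (measurable_fst.add measurable_snd)
          measurable_const) measurable_const measurable_const
      · intro x hx y hy
        beta_reduce
        by_cases h : x + y ≤ 1
        · rw [if_pos h]; norm_num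
        · rw [if_neg h]; norm_num
    have hcon : (∫ x in Icc (0:ℝ) 1, ∫ y in Icc (0:ℝ) 1, (if x + y ≤ 1 then (1:ℝ) else 0))
        = ∫ x in Icc (0:ℝ) 1, (1 - x) :=
      setIntegral_congr_fun measurableSet_Icc (fun x hx => UC.inner_one hx)
    rw [hform, hbr, hcon, UC.outer_one]
  refine ⟨?_, ?_, ?_⟩
  · -- Part 1
    intro k _
    constructor
    · have h := UC.condexp_moment μ hX₁ hX₂ hindep hlaw₁ hlaw₂ k
      rw [← hS] at h
      have he : (fun ω => uniformCondMoment k (X₁ ω + X₂ ω))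
          = fun ω => uniformCondMoment k (S ω) := by
        funext ω; rw [hSeq ω]
      rw [he] at h
      exact h
    · have h := UC.condexp_moment μ hX₂ hX₁ hindep.symm hlaw₂ hlaw₁ k
      rw [← hcomm] at h
      have he : (fun ω => uniformCondMoment k (X₂ ω + X₁ ω))
          = fun ω => uniformCondMoment k (S ω) := by
        funext ω; rw [hSeq ω, add_comm]
      rw [he] at h
      exact h
  · -- Part 2
    rintro ⟨c, hc⟩
    have hAm : MeasurableSet[MeasurableSpace.comap S (borel ℝ)] {ω | S ω ≤ 1} := by
      rw [UC.borel_real]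
      exact ⟨Iic 1, measurableSet_Iic, rfl⟩
    have hconst : ∀ (A : Set Ω), MeasurableSet[MeasurableSpace.comap S (borel ℝ)] A →
        ∫ ω in A, (X₁ ω / S ω)^2 ∂μ = (μ A).toReal * c := by
      intro A hAm'
      rw [← setIntegral_condExp hm hRint hAm']
      calc ∫ ω in A, (μ[(fun ω => (X₁ ω / S ω)^2)|MeasurableSpace.comap S (borel ℝ)]) ω ∂μ
          = ∫ _ω in A, c ∂μ := integral_congr_ae (ae_restrict_of_ae hc)
        _ = (μ A).toReal * c := by rw [setIntegral_const, smul_eq_mul, measureReal_def]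
    have h1 : (1:ℝ)/6 = (1/2) * c := by
      rw [← QA, hconst _ hAm, QP]
    have hcompl_meas : (μ {ω | S ω ≤ 1}ᶜ).toReal = 1/2 := by
      rw [measure_compl hA (measure_ne_top μ _), measure_univ,
        ENNReal.toReal_sub_of_le prob_le_one ENNReal.one_ne_top, ENNReal.toReal_one, QP]
      norm_num
    have h2 : (∫ ω in {ω | S ω ≤ 1}ᶜ, (X₁ ω / S ω)^2 ∂μ) = (1/2) * c := by
      rw [hconst _ hAm.compl, hcompl_meas]
    have h3 : (∫ ω in {ω | S ω ≤ 1}ᶜ, (X₁ ω / S ω)^2 ∂μ) = 5/6 - Real.log 2 := by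
      have := integral_add_compl hA hRint
      rw [QA, Qtot] at this
      linarith
    have hlog : Real.log 2 = 2/3 := by
      rw [h2] at h3
      linarith
    have := Real.log_two_gt_d9
    rw [hlog] at this
    norm_num at this
  · -- Part 3
    refine ⟨0, ⟨le_refl 0, zero_lt_one⟩, ?_⟩
    have hVaR : VaR μ S 0 = 0 := by
      have hset : {s : ℝ | 0 ≤ s ∧ ENNReal.ofReal 0 ≤ μ {ω | S ω ≤ s}} = Ici 0 := by
        ext s
        simp [ENNReal.ofReal_zero]
      unfold VaR
      rw [hset, csInf_Ici]
    have htail : tailSet μ S 0 = {ω | 0 < S ω} := by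
      unfold tailSet
      rw [hVaR]
    have htail_ae : ∀ᵐ ω ∂μ, ω ∈ tailSet μ S 0 := by
      rw [htail]
      exact hSpos
    have hrestr : μ.restrict (tailSet μ S 0) = μ :=
      Measure.restrict_eq_self_of_ae_mem htail_ae
    have htailμ : (μ (tailSet μ S 0)).toReal = 1 := by
      have hcompl : μ (tailSet μ S 0)ᶜ = 0 := by
        have := ae_iff.mp htail_ae
        convert this using 2
        rfl
      have : μ (tailSet μ S 0) = 1 := by
        rw [measure_congr (ae_eq_univ.mpr hcompl), measure_univ]
      rw [this, ENNReal.toReal_one]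
    rw [show (∫ ω in tailSet μ S 0, X₁ ω ^ 2 ∂μ) = ∫ ω, X₁ ω ^ 2 ∂μ by rw [hrestr],
      show (∫ ω in tailSet μ S 0, S ω ^ 2 ∂μ) = ∫ ω, S ω ^ 2 ∂μ by rw [hrestr],
      show (∫ ω in tailSet μ S 0, (X₁ ω / S ω) ^ 2 ∂μ) = ∫ ω, (X₁ ω / S ω) ^ 2 ∂μ by rw [hrestr],
      QX2, QS2, Qtot, htailμ]
    intro h
    rw [div_one] at h
    have := Real.log_two_lt_d9
    norm_num at h
    nlinarith
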